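/- Let a, b, c > 0 be fixed real numbers and for ε > 0 let V(ε) = (1/4)·∫_0^{εb} (tanh(λ)·sinh(εa)/√(tanh²(εb)·cosh²(λ) + sinh²(εa)·sinh²(λ))) · log((sinh(εb) + tanh(εc)·sinh(λ))/(sinh(εb) − tanh(εc)·sinh(λ))) dλ. Then V(ε)/ε³ tends to a·b·c/6 as ε → 0⁺. -/

import Mathlib

open Real Filter MeasureTheory intervalIntegral

lemma my_tanh_pos {x : ℝ} (hx : 0 < x) : 0 < Real.tanh x := by
  rw [Real.tanh_eq_sinh_div_cosh]
  exact div_pos (by rwa [Real.sinh_pos_iff]) (Real.cosh_pos x)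

lemma my_tanh_nonneg {x : ℝ} (hx : 0 ≤ x) : 0 ≤ Real.tanh x := by
  rw [Real.tanh_eq_sinh_div_cosh]
  exact div_nonneg (by rwa [Real.sinh_nonneg_iff]) (Real.cosh_pos x).le

lemma my_sinh_lt_cosh (x : ℝ) : Real.sinh x < Real.cosh x := by
  rw [Real.sinh_eq, Real.cosh_eq]
  have := Real.exp_pos (-x)
  linarith

lemma my_tanh_lt_one (x : ℝ) : Real.tanh x < 1 := by
  rw [Real.tanh_eq_sinh_div_cosh]
  rw [div_lt_one (Real.cosh_pos x)]
  exact my_sinh_lt_cosh x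

lemma my_hasDerivAt_aux (y : ℝ) :
    HasDerivAt (fun x => x * Real.cosh x - Real.sinh x) (y * Real.sinh y) y := by
  have h1 := (hasDerivAt_id y).mul (Real.hasDerivAt_cosh y)
  have h2 := Real.hasDerivAt_sinh y
  have := h1.sub h2
  exact this.congr_deriv (by simp only [id, one_mul]; ring)

lemma my_sinh_le_mul_cosh {x : ℝ} (hx : 0 ≤ x) : Real.sinh x ≤ x * Real.cosh x := by
  have h : MonotoneOn (fun x => x * Real.cosh x - Real.sinh x) (Set.Ici 0) := by
    apply monotoneOn_of_deriv_nonneg (convex_Ici _)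
      (((continuous_id.mul Real.continuous_cosh).sub Real.continuous_sinh).continuousOn)
      (fun y _ => (my_hasDerivAt_aux y).differentiableAt.differentiableWithinAt)
    intro y hy
    show 0 ≤ deriv (fun x => id x * Real.cosh x - Real.sinh x) y
    simp only [id]
    rw [(my_hasDerivAt_aux y).deriv]
    rw [interior_Ici, Set.mem_Ioi] at hy
    exact mul_nonneg hy.le (Real.sinh_nonneg_iff.mpr hy.le)
  have h0 := h (Set.self_mem_Ici) (Set.mem_Ici.mpr hx) hx
  simp at h0
  linarith


noncomputable def myD (a b ε : ℝ) : ℝ :=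
  Real.sqrt (Real.tanh (ε*b)^2 * Real.cosh (ε*b)^2 + Real.sinh (ε*a)^2 * Real.sinh (ε*b)^2)

noncomputable def myF (a b c ε l : ℝ) : ℝ :=
  (Real.tanh l * Real.sinh (ε * a) /
      Real.sqrt (Real.tanh (ε * b) ^ 2 * Real.cosh l ^ 2 +
        Real.sinh (ε * a) ^ 2 * Real.sinh l ^ 2)) *
    Real.log ((Real.sinh (ε * b) + Real.tanh (ε * c) * Real.sinh l) /
      (Real.sinh (ε * b) - Real.tanh (ε * c) * Real.sinh l))

noncomputable def myKhi (a b c ε : ℝ) : ℝ :=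
  2 * Real.sinh (ε*a) * Real.tanh (ε*c) * Real.cosh (ε*b)^2 /
    (Real.tanh (ε*b) * Real.sinh (ε*b) * (1 - Real.tanh (ε*c)))

noncomputable def myKlo (a b c ε : ℝ) : ℝ :=
  2 * Real.sinh (ε*a) * Real.tanh (ε*c) /
    (Real.cosh (ε*b) * myD a b ε * Real.sinh (ε*b) * (1 + Real.tanh (ε*c)))


lemma my_continuous_tanh : Continuous Real.tanh := by
  have : Real.tanh = fun x => Real.sinh x / Real.cosh x := by
    funext x; rw [Real.tanh_eq_sinh_div_cosh]
  rw [this]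
  exact Real.continuous_sinh.div Real.continuous_cosh (fun x => (Real.cosh_pos x).ne')

lemma my_tendsto_mul_ne (k : ℝ) (hk : 0 < k) :
    Tendsto (fun ε : ℝ => ε * k) (nhdsWithin 0 (Set.Ioi 0)) (nhdsWithin 0 {x : ℝ | x ≠ 0}) := by
  apply tendsto_nhdsWithin_of_tendsto_nhds_of_eventually_within
  · have : Tendsto (fun ε : ℝ => ε * k) (nhds 0) (nhds 0) := by
      simpa using Continuous.tendsto (f := fun ε : ℝ => ε * k) (continuous_id.mul (continuous_const (y := k))) 0
    exact this.mono_left nhdsWithin_le_nhds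
  · filter_upwards [self_mem_nhdsWithin] with x hx
    exact (mul_pos hx hk).ne'

lemma my_slope_sinh : Tendsto (fun x : ℝ => Real.sinh x / x) (nhdsWithin 0 {x : ℝ | x ≠ 0}) (nhds 1) := by
  have h := hasDerivAt_iff_tendsto_slope.mp (Real.hasDerivAt_sinh 0)
  rw [Real.cosh_zero] at h
  refine h.congr fun x => ?_
  simp [slope_def_field]

lemma my_hasDerivAt_tanh0 : HasDerivAt Real.tanh 1 0 := by
  have h := (Real.hasDerivAt_sinh 0).div (Real.hasDerivAt_cosh 0) (Real.cosh_pos 0).ne'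
  simp only [Real.sinh_zero, Real.cosh_zero] at h
  norm_num at h
  refine h.congr_of_eventuallyEq ?_
  filter_upwards with x
  rw [Real.tanh_eq_sinh_div_cosh]
  rfl

lemma my_slope_tanh : Tendsto (fun x : ℝ => Real.tanh x / x) (nhdsWithin 0 {x : ℝ | x ≠ 0}) (nhds 1) := by
  have h := hasDerivAt_iff_tendsto_slope.mp my_hasDerivAt_tanh0
  refine h.congr fun x => ?_
  simp [slope_def_field]

lemma my_sinh_lim (k : ℝ) (hk : 0 < k) :
    Tendsto (fun ε : ℝ => Real.sinh (ε * k) / ε) (nhdsWithin 0 (Set.Ioi 0)) (nhds k) := by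
  have h := (my_slope_sinh.comp (my_tendsto_mul_ne k hk)).mul_const k
  rw [one_mul] at h
  refine h.congr' ?_
  filter_upwards [self_mem_nhdsWithin] with ε hε
  have hε' : (ε:ℝ) ≠ 0 := (Set.mem_Ioi.mp hε).ne'
  have hk' : k ≠ 0 := hk.ne'
  simp only [Function.comp_apply]
  field_simp

lemma my_tanh_lim (k : ℝ) (hk : 0 < k) :
    Tendsto (fun ε : ℝ => Real.tanh (ε * k) / ε) (nhdsWithin 0 (Set.Ioi 0)) (nhds k) := by
  have h := (my_slope_tanh.comp (my_tendsto_mul_ne k hk)).mul_const k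
  rw [one_mul] at h
  refine h.congr' ?_
  filter_upwards [self_mem_nhdsWithin] with ε hε
  have hε' : (ε:ℝ) ≠ 0 := (Set.mem_Ioi.mp hε).ne'
  have hk' : k ≠ 0 := hk.ne'
  simp only [Function.comp_apply]
  field_simp

lemma my_cont_lim (g : ℝ → ℝ) (hg : Continuous g) (k : ℝ) :
    Tendsto (fun ε : ℝ => g (ε * k)) (nhdsWithin 0 (Set.Ioi 0)) (nhds (g 0)) := by
  have : Tendsto (fun ε : ℝ => g (ε * k)) (nhds 0) (nhds (g 0)) := by
    have := Continuous.tendsto (f := fun ε : ℝ => g (ε * k)) (hg.comp (continuous_id.mul (continuous_const (y := k)))) 0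
    simpa using this
  exact this.mono_left nhdsWithin_le_nhds

lemma my_Khi_lim (a b c : ℝ) (ha : 0 < a) (hb : 0 < b) (hc : 0 < c) :
    Tendsto (fun ε : ℝ => 2 * Real.sinh (ε*a) * Real.tanh (ε*c) * Real.cosh (ε*b)^2 /
        (Real.tanh (ε*b) * Real.sinh (ε*b) * (1 - Real.tanh (ε*c))))
      (nhdsWithin 0 (Set.Ioi 0)) (nhds (2*a*c/b^2)) := by
  have h1 := my_sinh_lim a ha
  have h2 := my_tanh_lim c hc
  have h3 := my_cont_lim (fun x => Real.cosh x ^ 2) (Real.continuous_cosh.pow 2) b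
  have h4 := (my_tanh_lim b hb).inv₀ hb.ne'
  have h5 := (my_sinh_lim b hb).inv₀ hb.ne'
  have h6 := my_cont_lim (fun x => (1 - Real.tanh x)⁻¹)
      ((continuous_const.sub my_continuous_tanh).inv₀
        (fun x => by have := my_tanh_lt_one x; intro h; have h' : 1 - Real.tanh x = 0 := h; linarith)) c
  have H := (((((h1.mul h2).mul h3).mul h4).mul h5).mul h6).const_mul 2
  have hv : 2 * (a * c * Real.cosh 0 ^ 2 * b⁻¹ * b⁻¹ * (1 - Real.tanh 0)⁻¹) = 2*a*c/b^2 := by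
    simp [Real.cosh_zero, Real.tanh_zero]
    field_simp
  rw [hv] at H
  refine H.congr' ?_
  filter_upwards [self_mem_nhdsWithin] with ε hε
  have hε' : (ε:ℝ) ≠ 0 := (Set.mem_Ioi.mp hε).ne'
  have htb : Real.tanh (ε*b) ≠ 0 := (my_tanh_pos (mul_pos (Set.mem_Ioi.mp hε) hb)).ne'
  have hsb : Real.sinh (ε*b) ≠ 0 := by
    rw [ne_eq, ← Real.sinh_zero]
    intro h
    have := Real.sinh_strictMono.injective h
    exact (mul_pos (Set.mem_Ioi.mp hε) hb).ne' this
  have htc : (1 : ℝ) - Real.tanh (ε*c) ≠ 0 := by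
    have := my_tanh_lt_one (ε*c); intro h; linarith
  field_simp


lemma my_D_lim (a b : ℝ) (ha : 0 < a) (hb : 0 < b) :
    Tendsto (fun ε : ℝ => myD a b ε / ε) (nhdsWithin 0 (Set.Ioi 0)) (nhds b) := by
  have hin : Tendsto (fun ε : ℝ => (Real.tanh (ε*b)/ε)^2 * Real.cosh (ε*b)^2 +
      (Real.sinh (ε*a)/ε)^2 * Real.sinh (ε*b)^2) (nhdsWithin 0 (Set.Ioi 0))
      (nhds (b^2 * Real.cosh 0 ^2 + a^2 * Real.sinh 0 ^2)) := by
    exact (((my_tanh_lim b hb).pow 2).mul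
        (my_cont_lim (fun x => Real.cosh x ^ 2) (Real.continuous_cosh.pow 2) b)).add
      (((my_sinh_lim a ha).pow 2).mul
        (my_cont_lim (fun x => Real.sinh x ^ 2) (Real.continuous_sinh.pow 2) b))
  have H := (Real.continuous_sqrt.tendsto _).comp hin
  have hv : Real.sqrt (b^2 * Real.cosh 0 ^2 + a^2 * Real.sinh 0 ^2) = b := by
    simp [Real.cosh_zero, Real.sinh_zero]
    exact Real.sqrt_sq hb.le
  rw [hv] at H
  refine H.congr' ?_
  filter_upwards [self_mem_nhdsWithin] with ε hε
  have hε0 : (0:ℝ) < ε := Set.mem_Ioi.mp hε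
  have hT : 0 ≤ Real.tanh (ε*b)^2 * Real.cosh (ε*b)^2 + Real.sinh (ε*a)^2 * Real.sinh (ε*b)^2 :=
    by positivity
  show Real.sqrt _ = myD a b ε / ε
  rw [myD]
  have heq : (Real.tanh (ε*b)/ε)^2 * Real.cosh (ε*b)^2 + (Real.sinh (ε*a)/ε)^2 * Real.sinh (ε*b)^2
      = (Real.tanh (ε*b)^2 * Real.cosh (ε*b)^2 + Real.sinh (ε*a)^2 * Real.sinh (ε*b)^2) / ε^2 := by
    field_simp
  show Real.sqrt ((Real.tanh (ε*b)/ε)^2 * Real.cosh (ε*b)^2 + (Real.sinh (ε*a)/ε)^2 * Real.sinh (ε*b)^2) = _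
  rw [heq, Real.sqrt_div hT, Real.sqrt_sq hε0.le]

lemma my_Klo_lim (a b c : ℝ) (ha : 0 < a) (hb : 0 < b) (hc : 0 < c) :
    Tendsto (fun ε : ℝ => 2 * Real.sinh (ε*a) * Real.tanh (ε*c) /
        (Real.cosh (ε*b) * myD a b ε * Real.sinh (ε*b) * (1 + Real.tanh (ε*c))))
      (nhdsWithin 0 (Set.Ioi 0)) (nhds (2*a*c/b^2)) := by
  have h1 := my_sinh_lim a ha
  have h2 := my_tanh_lim c hc
  have h3 := my_cont_lim (fun x => (Real.cosh x)⁻¹)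
      (Real.continuous_cosh.inv₀ (fun x => (Real.cosh_pos x).ne')) b
  have h4 := (my_D_lim a b ha hb).inv₀ hb.ne'
  have h5 := (my_sinh_lim b hb).inv₀ hb.ne'
  have h6 := my_cont_lim (fun x => (1 + Real.tanh x)⁻¹)
      ((continuous_const.add my_continuous_tanh).inv₀
        (fun x => by have := my_tanh_lt_one (-x); rw [Real.tanh_neg] at this; intro h; have h' : 1 + Real.tanh x = 0 := h; linarith)) c
  have H := (((((h1.mul h2).mul h3).mul h4).mul h5).mul h6).const_mul 2
  have hv : 2 * (a * c * (Real.cosh 0)⁻¹ * b⁻¹ * b⁻¹ * (1 + Real.tanh 0)⁻¹) = 2*a*c/b^2 := by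
    simp [Real.cosh_zero, Real.tanh_zero]
    field_simp
  rw [hv] at H
  refine H.congr' ?_
  filter_upwards [self_mem_nhdsWithin] with ε hε
  have hε0 : (0:ℝ) < ε := Set.mem_Ioi.mp hε
  have hε' : (ε:ℝ) ≠ 0 := hε0.ne'
  have hD : myD a b ε ≠ 0 := by
    rw [myD]
    have h1 : (0:ℝ) < Real.tanh (ε*b)^2 * Real.cosh (ε*b)^2 := by
      have := my_tanh_pos (mul_pos hε0 hb)
      positivity
    positivity
  have hcosh : Real.cosh (ε*b) ≠ 0 := (Real.cosh_pos _).ne'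
  have hsb : Real.sinh (ε*b) ≠ 0 := by
    rw [ne_eq, ← Real.sinh_zero]
    intro h
    exact (mul_pos hε0 hb).ne' (Real.sinh_strictMono.injective h)
  have htc : (1:ℝ) + Real.tanh (ε*c) ≠ 0 := by
    have := my_tanh_nonneg (mul_pos hε0 hc).le
    intro h; linarith
  field_simp


set_option maxHeartbeats 2000000 in
lemma my_key (l sa tb tc S cT D sl tl sq : ℝ)
    (hsa : 0 < sa) (htb : 0 < tb) (htc0 : 0 < tc) (htc1 : tc < 1) (hS : 0 < S)
    (hcT1 : 1 ≤ cT) (hl0 : 0 ≤ l) (hsl0 : 0 ≤ sl) (hsl_ge : l ≤ sl) (hslcT : sl ≤ l * cT)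
    (hslS : sl ≤ S) (htl0 : 0 ≤ tl) (htl_le : tl ≤ l * cT) (htl_ge : l / cT ≤ tl)
    (hsq1 : tb ≤ sq) (hsq2 : sq ≤ D) :
    2*sa*tc/(cT*D*S*(1+tc)) * l^2 ≤ (tl*sa/sq) * Real.log ((S+tc*sl)/(S-tc*sl)) ∧
    (tl*sa/sq) * Real.log ((S+tc*sl)/(S-tc*sl)) ≤ 2*sa*tc*cT^2/(tb*S*(1-tc)) * l^2 := by
  have hsqpos : 0 < sq := lt_of_lt_of_le htb hsq1
  have hD : 0 < D := lt_of_lt_of_le hsqpos hsq2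
  have hcT0 : (0:ℝ) < cT := lt_of_lt_of_le one_pos hcT1
  set x := tc * sl with hx_def
  have hx0 : 0 ≤ x := mul_nonneg htc0.le hsl0
  have hxS : x ≤ tc * S := mul_le_mul_of_nonneg_left hslS htc0.le
  have hSx : 0 < S - x := by nlinarith
  have hNx : 0 < S + x := by linarith
  have hLub : Real.log ((S+x)/(S-x)) ≤ 2*x/(S-x) := by
    have h := Real.log_le_sub_one_of_pos (show 0 < (S+x)/(S-x) by positivity)
    have he : (S+x)/(S-x) - 1 = 2*x/(S-x) := by field_simp; ring
    linarith
  have hLlb : 2*x/(S+x) ≤ Real.log ((S+x)/(S-x)) := by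
    have h := Real.log_le_sub_one_of_pos (show 0 < (S-x)/(S+x) by positivity)
    have h2 := Real.log_inv ((S-x)/(S+x))
    rw [inv_div] at h2
    have he : (S-x)/(S+x) - 1 = -(2*x/(S+x)) := by field_simp; ring
    linarith
  have hL0 : 0 ≤ Real.log ((S+x)/(S-x)) := le_trans (by positivity) hLlb
  have hP_ub : tl * sa / sq ≤ l * cT * sa / tb :=
    div_le_div₀ (by positivity) (mul_le_mul_of_nonneg_right htl_le hsa.le) htb hsq1
  have hP_lb : l / cT * sa / D ≤ tl * sa / sq :=
    div_le_div₀ (by positivity) (mul_le_mul_of_nonneg_right htl_ge hsa.le) hsqpos hsq2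
  have hP0 : 0 ≤ tl * sa / sq := by positivity
  constructor
  · have hLlb2 : 2*(tc*l)/(S*(1+tc)) ≤ Real.log ((S+x)/(S-x)) := by
      refine le_trans ?_ hLlb
      calc 2*(tc*l)/(S*(1+tc)) ≤ 2*x/(S*(1+tc)) := by
            gcongr
            exact mul_le_mul_of_nonneg_left hsl_ge htc0.le
        _ ≤ 2*x/(S+x) := by
            apply div_le_div_of_nonneg_left (by positivity) (by positivity)
            nlinarith
    have hmul := mul_le_mul hP_lb hLlb2 (by positivity) hP0
    have heq : 2*sa*tc/(cT*D*S*(1+tc)) * l^2 = (l / cT * sa / D) * (2*(tc*l)/(S*(1+tc))) := by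
      field_simp
    rw [heq]
    exact hmul
  · have hLub2 : Real.log ((S+x)/(S-x)) ≤ 2*(tc*(l*cT))/(S*(1-tc)) := by
      refine le_trans hLub ?_
      have hden : 0 < S*(1-tc) := by nlinarith
      calc 2*x/(S-x) ≤ 2*x/(S*(1-tc)) := by
            apply div_le_div_of_nonneg_left (by positivity) hden
            nlinarith
        _ ≤ 2*(tc*(l*cT))/(S*(1-tc)) := by
            rw [div_le_div_iff₀ hden hden]
            nlinarith [mul_le_mul_of_nonneg_right (mul_le_mul_of_nonneg_left hslcT htc0.le) hden.le]
    have hmul := mul_le_mul hP_ub hLub2 hL0 (by positivity)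
    have heq : 2*sa*tc*cT^2/(tb*S*(1-tc)) * l^2 = (l * cT * sa / tb) * (2*(tc*(l*cT))/(S*(1-tc))) := by
      have h1 : (1:ℝ) - tc ≠ 0 := by linarith
      field_simp
    rw [heq]
    exact hmul


lemma my_pointwise (a b c ε : ℝ) (ha : 0 < a) (hb : 0 < b) (hc : 0 < c) (hε : 0 < ε)
    (l : ℝ) (hl : l ∈ Set.Icc 0 (ε*b)) :
    myKlo a b c ε * l^2 ≤ myF a b c ε l ∧ myF a b c ε l ≤ myKhi a b c ε * l^2 := by
  obtain ⟨hl0, hlT⟩ := hl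
  have hcl1 : (1:ℝ) ≤ Real.cosh l := Real.one_le_cosh _
  have hclpos : (0:ℝ) < Real.cosh l := Real.cosh_pos _
  have hsl0 : 0 ≤ Real.sinh l := Real.sinh_nonneg_iff.mpr hl0
  have hcl_le : Real.cosh l ≤ Real.cosh (ε*b) := by
    rw [Real.cosh_le_cosh, abs_of_nonneg hl0, abs_of_nonneg (le_trans hl0 hlT)]
    exact hlT
  have hslcT : Real.sinh l ≤ l * Real.cosh (ε*b) :=
    le_trans (my_sinh_le_mul_cosh hl0) (mul_le_mul_of_nonneg_left hcl_le hl0)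
  have htb : 0 < Real.tanh (ε*b) := my_tanh_pos (mul_pos hε hb)
  have htl_le : Real.tanh l ≤ l * Real.cosh (ε*b) := by
    refine le_trans ?_ hslcT
    rw [Real.tanh_eq_sinh_div_cosh]
    exact div_le_self hsl0 hcl1
  have htl_ge : l / Real.cosh (ε*b) ≤ Real.tanh l := by
    rw [Real.tanh_eq_sinh_div_cosh]
    calc l / Real.cosh (ε*b) ≤ l / Real.cosh l := by gcongr
      _ ≤ Real.sinh l / Real.cosh l := by
        gcongr
        exact Real.self_le_sinh_iff.mpr hl0
  have hsq1 : Real.tanh (ε*b) ≤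
      Real.sqrt (Real.tanh (ε*b)^2 * Real.cosh l^2 + Real.sinh (ε*a)^2 * Real.sinh l^2) := by
    have h1 : Real.tanh (ε*b)^2 * 1 ≤ Real.tanh (ε*b)^2 * Real.cosh l^2 := by
      apply mul_le_mul_of_nonneg_left _ (sq_nonneg _)
      nlinarith
    have h2 : 0 ≤ Real.sinh (ε*a)^2 * Real.sinh l^2 := by positivity
    calc Real.tanh (ε*b) = Real.sqrt (Real.tanh (ε*b)^2) := (Real.sqrt_sq htb.le).symm
      _ ≤ _ := Real.sqrt_le_sqrt (by linarith)
  have hsq2 : Real.sqrt (Real.tanh (ε*b)^2 * Real.cosh l^2 + Real.sinh (ε*a)^2 * Real.sinh l^2)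
      ≤ myD a b ε := by
    rw [myD]
    apply Real.sqrt_le_sqrt
    have hslS' : Real.sinh l ≤ Real.sinh (ε*b) := Real.sinh_le_sinh.mpr hlT
    have h1 : Real.cosh l^2 ≤ Real.cosh (ε*b)^2 := by nlinarith
    have h2 : Real.sinh l^2 ≤ Real.sinh (ε*b)^2 := by nlinarith
    have h3 := mul_le_mul_of_nonneg_left h1 (sq_nonneg (Real.tanh (ε*b)))
    have h4 := mul_le_mul_of_nonneg_left h2 (sq_nonneg (Real.sinh (ε*a)))
    linarith
  have H := my_key l (Real.sinh (ε*a)) (Real.tanh (ε*b)) (Real.tanh (ε*c)) (Real.sinh (ε*b))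
    (Real.cosh (ε*b)) (myD a b ε) (Real.sinh l) (Real.tanh l)
    (Real.sqrt (Real.tanh (ε*b)^2 * Real.cosh l^2 + Real.sinh (ε*a)^2 * Real.sinh l^2))
    (Real.sinh_pos_iff.mpr (mul_pos hε ha)) htb (my_tanh_pos (mul_pos hε hc))
    (my_tanh_lt_one _) (Real.sinh_pos_iff.mpr (mul_pos hε hb)) (Real.one_le_cosh _)
    hl0 hsl0 (Real.self_le_sinh_iff.mpr hl0) hslcT (Real.sinh_le_sinh.mpr hlT)
    (my_tanh_nonneg hl0) htl_le htl_ge hsq1 hsq2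
  rw [myF, myKlo, myKhi]
  exact H


lemma my_integrable (a b c ε : ℝ) (ha : 0 < a) (hb : 0 < b) (hc : 0 < c) (hε : 0 < ε) :
    IntervalIntegrable (myF a b c ε) volume 0 (ε*b) := by
  apply ContinuousOn.intervalIntegrable
  rw [Set.uIcc_of_le (by positivity)]
  have htb : 0 < Real.tanh (ε*b) := my_tanh_pos (mul_pos hε hb)
  have hS : 0 < Real.sinh (ε*b) := Real.sinh_pos_iff.mpr (mul_pos hε hb)
  have htc0 : 0 ≤ Real.tanh (ε*c) := my_tanh_nonneg (mul_pos hε hc).le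
  have htc1 : Real.tanh (ε*c) < 1 := my_tanh_lt_one _
  have h1 : Continuous (fun l : ℝ => Real.tanh l * Real.sinh (ε * a) /
      Real.sqrt (Real.tanh (ε * b) ^ 2 * Real.cosh l ^ 2 +
        Real.sinh (ε * a) ^ 2 * Real.sinh l ^ 2)) := by
    apply Continuous.div (my_continuous_tanh.mul continuous_const)
      (Real.continuous_sqrt.comp
        ((continuous_const.mul (Real.continuous_cosh.pow 2)).add
          (continuous_const.mul (Real.continuous_sinh.pow 2))))
    intro l
    have hcl : (1:ℝ) ≤ Real.cosh l := Real.one_le_cosh l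
    have h2 : (1:ℝ) ≤ Real.cosh l ^ 2 := by nlinarith
    have h3 : 0 < Real.tanh (ε*b)^2 := by positivity
    have h4 : Real.tanh (ε*b)^2 * 1 ≤ Real.tanh (ε*b)^2 * Real.cosh l ^2 :=
      mul_le_mul_of_nonneg_left h2 h3.le
    have h5 : 0 ≤ Real.sinh (ε * a) ^ 2 * Real.sinh l ^ 2 := by positivity
    have : 0 < Real.tanh (ε * b) ^ 2 * Real.cosh l ^ 2 +
        Real.sinh (ε * a) ^ 2 * Real.sinh l ^ 2 := by nlinarith
    exact (Real.sqrt_pos.mpr this).ne'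
  have hden : ∀ l ∈ Set.Icc 0 (ε*b),
      0 < Real.sinh (ε * b) - Real.tanh (ε * c) * Real.sinh l := by
    intro l hl
    have hslS : Real.sinh l ≤ Real.sinh (ε*b) := Real.sinh_le_sinh.mpr hl.2
    have hsl0 : 0 ≤ Real.sinh l := Real.sinh_nonneg_iff.mpr hl.1
    nlinarith
  have h2 : ContinuousOn (fun l : ℝ =>
      Real.log ((Real.sinh (ε * b) + Real.tanh (ε * c) * Real.sinh l) /
        (Real.sinh (ε * b) - Real.tanh (ε * c) * Real.sinh l))) (Set.Icc 0 (ε*b)) := by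
    apply ContinuousOn.log
    · exact ContinuousOn.div
        (continuous_const.add (continuous_const.mul Real.continuous_sinh)).continuousOn
        (continuous_const.sub (continuous_const.mul Real.continuous_sinh)).continuousOn
        (fun l hl => (hden l hl).ne')
    · intro l hl
      have hsl0 : 0 ≤ Real.sinh l := Real.sinh_nonneg_iff.mpr hl.1
      have := hden l hl
      have hnum : 0 < Real.sinh (ε * b) + Real.tanh (ε * c) * Real.sinh l := by nlinarith
      positivity
  exact h1.continuousOn.mul h2

lemma my_integral_bounds (a b c ε : ℝ) (ha : 0 < a) (hb : 0 < b) (hc : 0 < c) (hε : 0 < ε) :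
    myKlo a b c ε * (ε*b)^3/3 ≤ (∫ l in (0:ℝ)..(ε*b), myF a b c ε l) ∧
    (∫ l in (0:ℝ)..(ε*b), myF a b c ε l) ≤ myKhi a b c ε * (ε*b)^3/3 := by
  have hT : 0 ≤ ε * b := by positivity
  have hint := my_integrable a b c ε ha hb hc hε
  have hintlo : IntervalIntegrable (fun l => myKlo a b c ε * l^2) volume 0 (ε*b) :=
    (continuous_const.mul (continuous_pow 2)).intervalIntegrable _ _
  have hinthi : IntervalIntegrable (fun l => myKhi a b c ε * l^2) volume 0 (ε*b) :=
    (continuous_const.mul (continuous_pow 2)).intervalIntegrable _ _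
  have hcalc : ∀ K : ℝ, (∫ l in (0:ℝ)..(ε*b), K * l^2) = K * (ε*b)^3/3 := by
    intro K
    rw [intervalIntegral.integral_const_mul]
    rw [integral_pow]
    norm_num
    ring
  constructor
  · have := intervalIntegral.integral_mono_on hT hintlo hint
      (fun l hl => (my_pointwise a b c ε ha hb hc hε l hl).1)
    rwa [hcalc] at this
  · have := intervalIntegral.integral_mono_on hT hint hinthi
      (fun l hl => (my_pointwise a b c ε ha hb hc hε l hl).2)
    rwa [hcalc] at this


set_option maxHeartbeats 1000000 in
/-- The hyperbolic volume (curvature `k = 1`, via Theorem 1) of the orthosceme with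
edge lengths `εa`, `εb`, `εc` behaves like `ε³·abc/6` as `ε → 0⁺`: the formula
recovers the Euclidean volume of a small orthosceme. -/
theorem orthosceme_volume_euclidean_limit (a b c : ℝ) (ha : 0 < a) (hb : 0 < b) (hc : 0 < c) :
    Filter.Tendsto
      (fun ε : ℝ =>
        ((1 / 4) * ∫ l in (0:ℝ)..(ε * b),
          (Real.tanh l * Real.sinh (ε * a) /
              Real.sqrt (Real.tanh (ε * b) ^ 2 * Real.cosh l ^ 2 +
                Real.sinh (ε * a) ^ 2 * Real.sinh l ^ 2)) *
            Real.log ((Real.sinh (ε * b) + Real.tanh (ε * c) * Real.sinh l) /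
              (Real.sinh (ε * b) - Real.tanh (ε * c) * Real.sinh l))) / ε ^ 3)
      (nhdsWithin 0 (Set.Ioi 0))
      (nhds (a * b * c / 6)) := by
  have hrw : (fun ε : ℝ =>
        ((1 / 4) * ∫ l in (0:ℝ)..(ε * b),
          (Real.tanh l * Real.sinh (ε * a) /
              Real.sqrt (Real.tanh (ε * b) ^ 2 * Real.cosh l ^ 2 +
                Real.sinh (ε * a) ^ 2 * Real.sinh l ^ 2)) *
            Real.log ((Real.sinh (ε * b) + Real.tanh (ε * c) * Real.sinh l) /
              (Real.sinh (ε * b) - Real.tanh (ε * c) * Real.sinh l))) / ε ^ 3)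
      = (fun ε : ℝ => ((1 / 4) * ∫ l in (0:ℝ)..(ε * b), myF a b c ε l) / ε ^ 3) := rfl
  rw [hrw]
  have hval : (2*a*c/b^2) * (b^3/12) = a * b * c / 6 := by field_simp; ring
  have hlo : Tendsto (fun ε : ℝ => myKlo a b c ε * (b^3/12)) (nhdsWithin 0 (Set.Ioi 0))
      (nhds (a * b * c / 6)) := by
    rw [← hval]
    exact ((my_Klo_lim a b c ha hb hc).mul_const _).congr (fun ε => by rw [myKlo])
  have hhi : Tendsto (fun ε : ℝ => myKhi a b c ε * (b^3/12)) (nhdsWithin 0 (Set.Ioi 0))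
      (nhds (a * b * c / 6)) := by
    rw [← hval]
    exact ((my_Khi_lim a b c ha hb hc).mul_const _).congr (fun ε => by rw [myKhi])
  apply tendsto_of_tendsto_of_tendsto_of_le_of_le' hlo hhi
  · filter_upwards [self_mem_nhdsWithin] with ε hε
    have hε0 : (0:ℝ) < ε := Set.mem_Ioi.mp hε
    have hIB := (my_integral_bounds a b c ε ha hb hc hε0).1
    calc myKlo a b c ε * (b^3/12)
        = ((1/4) * (myKlo a b c ε * (ε*b)^3/3)) / ε^3 := by field_simp; ring
      _ ≤ ((1/4) * ∫ l in (0:ℝ)..(ε*b), myF a b c ε l) / ε^3 := by gcongr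
  · filter_upwards [self_mem_nhdsWithin] with ε hε
    have hε0 : (0:ℝ) < ε := Set.mem_Ioi.mp hε
    have hIB := (my_integral_bounds a b c ε ha hb hc hε0).2
    calc ((1/4) * ∫ l in (0:ℝ)..(ε*b), myF a b c ε l) / ε^3
        ≤ ((1/4) * (myKhi a b c ε * (ε*b)^3/3)) / ε^3 := by gcongr
      _ = myKhi a b c ε * (b^3/12) := by field_simp; ring
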